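/- There is no irreducible plane quintic curve having exactly six cusps (six A_2 singularities) as its singular locus. -/
import Mathlib

/-- There is no irreducible plane quintic with exactly six cusps (six `A_2`
singularities, each with Milnor number 2 and multiplicity 2).  The statement is
formalized relative to an abstract theory of irreducible plane curves with a
dual curve, satisfying the class formula
`deg C* = d(d-1) - Σ_{P ∈ Sing C} (μ(C,P) + m(C,P) - 1)` and the classical fact
that an irreducible curve whose dual has degree 2 is itself a conic. -/
theorem no_six_cuspidal_quintic {Curve Point : Type*}
    (degree : Curve → ℕ) (dual : Curve → Curve) (Irred : Curve → Prop)
    (Sing : Curve → Finset Point) (μ m : Curve → Point → ℕ)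
    (classFormula : ∀ C, Irred C →
      degree (dual C) = degree C * (degree C - 1)
        - ∑ P ∈ Sing C, (μ C P + m C P - 1))
    (dualDegTwo : ∀ C, Irred C → degree (dual C) = 2 → degree C = 2) :
    ¬ ∃ C, Irred C ∧ degree C = 5 ∧ (Sing C).card = 6 ∧
      (∀ P ∈ Sing C, μ C P = 2 ∧ m C P = 2) := by
  rintro ⟨C, hIrr, hdeg, hcard, hcusp⟩
  have hsum : ∑ P ∈ Sing C, (μ C P + m C P - 1) = 18 := by
    rw [Finset.sum_congr rfl fun P hP => by
      obtain ⟨h1, h2⟩ := hcusp P hP; rw [h1, h2]]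
    simp [hcard]
  have h2 : degree (dual C) = 2 := by
    rw [classFormula C hIrr, hdeg, hsum]
  have := dualDegTwo C hIrr h2
  omega
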